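/- Zhao's Theorem: If G is a finite simple d-regular graph (d ≥ 1, not necessarily bipartite) with n vertices, then the number of independent sets of G satisfies |I(G)| ≤ (2^{d+1} − 1)^{n/(2d)}. -/

import Mathlib

set_option linter.unusedSectionVars false

open Finset MeasureTheory ENNReal

section Aux

lemma two_point_holder {ι : Type*} (s : Finset ι) (a b : ι → ℝ≥0∞) (d : ℕ)
    (hcard : s.card = d) (hd : 0 < d) :
    (∏ i ∈ s, a i ^ (d : ℝ)⁻¹) + (∏ i ∈ s, b i ^ (d : ℝ)⁻¹) ≤
      ∏ i ∈ s, (a i + b i) ^ (d : ℝ)⁻¹ := by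
  have key := ENNReal.lintegral_prod_norm_pow_le (μ := Measure.count (α := Bool)) s
      (f := fun i x => bif x then a i else b i)
      (fun i _ => (Measurable.of_discrete).aemeasurable)
      (p := fun _ => (d : ℝ)⁻¹)
      (by simp [hcard, mul_inv_cancel₀ (by positivity : (d:ℝ) ≠ 0)])
      (fun i _ => by positivity)
  rw [lintegral_count] at key
  simp only [tsum_bool, cond_false, cond_true] at key
  refine le_trans (by rw [add_comm]; exact key) (Finset.prod_le_prod' fun i _ => ?_)
  rw [lintegral_count, tsum_bool]
  exact ENNReal.rpow_le_rpow (by simp [add_comm]) (by positivity)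

lemma pow_rpow_inv (x : ℝ≥0∞) {d : ℕ} (hd : 0 < d) : (x ^ d) ^ (d : ℝ)⁻¹ = x := by
  rw [← ENNReal.rpow_natCast, ← ENNReal.rpow_mul, mul_inv_cancel₀ (by positivity : (d:ℝ) ≠ 0),
    ENNReal.rpow_one]

lemma shearer {V ι : Type*} [DecidableEq V] (d : ℕ) (hd : 0 < d) (s : Finset ι)
    (U : Finset V) :
    ∀ (A : ι → Finset V) (F : ι → Finset V → ℝ≥0∞),
    (∀ i ∈ s, ∀ S ∈ U.powerset, F i S = F i (S ∩ A i)) →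
    (∀ v ∈ U, (s.filter (fun i => v ∈ A i)).card = d) →
    ∑ S ∈ U.powerset, ∏ i ∈ s, F i S ≤
      ∏ i ∈ s, (∑ T ∈ (A i ∩ U).powerset, F i T ^ d) ^ (d : ℝ)⁻¹ := by
  induction U using Finset.induction_on with
  | empty =>
    intro A F hdep hcov
    simp only [powerset_empty, sum_singleton, Finset.inter_empty]
    exact le_of_eq (Finset.prod_congr rfl fun i hi => (pow_rpow_inv _ hd).symm)
  | @insert v U' hv ih =>
    intro A F hdep hcov
    -- the two branch functions
    have hsubU : ∀ S ∈ U'.powerset, S ∈ (insert v U').powerset := fun S hS =>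
      Finset.mem_powerset.2 ((Finset.mem_powerset.1 hS).trans (Finset.subset_insert _ _))
    have hsubU' : ∀ S ∈ U'.powerset, insert v S ∈ (insert v U').powerset := fun S hS =>
      Finset.mem_powerset.2 (Finset.insert_subset_insert _ (Finset.mem_powerset.1 hS))
    have hvS : ∀ S ∈ U'.powerset, v ∉ S := fun S hS h =>
      hv (Finset.mem_powerset.1 hS h)
    -- dependence for the F branch
    have depF : ∀ i ∈ s, ∀ S ∈ U'.powerset, F i S = F i (S ∩ (A i \ {v})) := by
      intro i hi S hS
      have h1 : S ∩ (A i \ {v}) = S ∩ A i := by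
        ext x
        simp only [Finset.mem_inter, Finset.mem_sdiff, Finset.mem_singleton]
        constructor
        · tauto
        · rintro ⟨hx, hx2⟩
          exact ⟨hx, hx2, fun h => hvS S hS (h ▸ hx)⟩
      rw [h1]; exact hdep i hi S (hsubU S hS)
    have depGt : ∀ i ∈ s, ∀ S ∈ U'.powerset,
        F i (insert v S) = F i (insert v (S ∩ (A i \ {v}))) := by
      intro i hi S hS
      have h2 : insert v (S ∩ (A i \ {v})) ∈ (insert v U').powerset := by
        refine Finset.mem_powerset.2 (Finset.insert_subset_insert _ ?_)
        exact (Finset.inter_subset_left).trans (Finset.mem_powerset.1 hS)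
      rw [hdep i hi _ (hsubU' S hS), hdep i hi _ h2]
      congr 1
      ext x
      simp only [Finset.mem_inter, Finset.mem_insert, Finset.mem_sdiff, Finset.mem_singleton]
      by_cases hxv : x = v
      · rw [hxv]; by_cases hvA : v ∈ A i <;> tauto
      · tauto
    have covU' : ∀ u ∈ U', (s.filter (fun i => u ∈ A i \ {v})).card = d := by
      intro u hu
      have : (s.filter (fun i => u ∈ A i \ {v})) = s.filter (fun i => u ∈ A i) := by
        apply Finset.filter_congr
        intro i _
        simp only [Finset.mem_sdiff, Finset.mem_singleton, eq_iff_iff]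
        have : u ≠ v := fun h => hv (h ▸ hu)
        tauto
      rw [this]; exact hcov u (Finset.mem_insert_of_mem hu)
    have ihF := ih (fun i => A i \ {v}) F depF covU'
    have ihGt := ih (fun i => A i \ {v}) (fun i S => F i (insert v S))
      (fun i hi S hS => depGt i hi S hS) covU'
    rw [Finset.sum_powerset_insert hv]
    refine le_trans (add_le_add ihF ihGt) ?_
    -- notation
    set cF : ι → ℝ≥0∞ := fun i => ∑ T ∈ ((A i \ {v}) ∩ U').powerset, F i T ^ d with hcF
    set cT : ι → ℝ≥0∞ := fun i => ∑ T ∈ ((A i \ {v}) ∩ U').powerset, F i (insert v T) ^ d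
      with hcT
    set D : ι → ℝ≥0∞ := fun i => ∑ T ∈ (A i ∩ insert v U').powerset, F i T ^ d with hD
    -- facts
    have f1 : ∀ i ∈ s, v ∈ A i → cF i + cT i = D i := by
      intro i hi hvA
      have hset : A i ∩ insert v U' = insert v ((A i \ {v}) ∩ U') := by
        ext x
        simp only [Finset.mem_inter, Finset.mem_insert, Finset.mem_sdiff, Finset.mem_singleton]
        by_cases hxv : x = v
        · rw [hxv]; tauto
        · tauto
      have hvnot : v ∉ (A i \ {v}) ∩ U' := by simp
      show cF i + cT i = ∑ T ∈ (A i ∩ insert v U').powerset, F i T ^ d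
      rw [hset, Finset.sum_powerset_insert hvnot]
    have f2F : ∀ i ∈ s, v ∉ A i → cF i = D i := by
      intro i hi hvA
      have hset : A i ∩ insert v U' = (A i \ {v}) ∩ U' := by
        ext x
        simp only [Finset.mem_inter, Finset.mem_insert, Finset.mem_sdiff, Finset.mem_singleton]
        constructor
        · rintro ⟨hx1, hx2⟩
          refine ⟨⟨hx1, fun h => hvA (h ▸ hx1)⟩, ?_⟩
          rcases hx2 with h | h
          · exact absurd (h ▸ hx1) hvA
          · exact h
        · tauto
      show cF i = ∑ T ∈ (A i ∩ insert v U').powerset, F i T ^ d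
      rw [hset]
    have f2T : ∀ i ∈ s, v ∉ A i → cT i = D i := by
      intro i hi hvA
      rw [← f2F i hi hvA, hcF, hcT]
      refine Finset.sum_congr rfl fun T hT => ?_
      have hT' : T ∈ U'.powerset := Finset.mem_powerset.2
        ((Finset.mem_powerset.1 hT).trans Finset.inter_subset_right)
      congr 1
      rw [hdep i hi _ (hsubU' T hT'), hdep i hi T (hsubU T hT')]
      congr 1
      ext x
      simp only [Finset.mem_inter, Finset.mem_insert]
      constructor
      · rintro ⟨h1 | h1, h2⟩
        · exact absurd (h1 ▸ h2) hvA
        · exact ⟨h1, h2⟩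
      · tauto
    -- split s into s₁ (v ∈ A i) and s₂
    rw [← Finset.prod_filter_mul_prod_filter_not s (fun i => v ∈ A i)
        (fun i => cF i ^ (d:ℝ)⁻¹),
      ← Finset.prod_filter_mul_prod_filter_not s (fun i => v ∈ A i)
        (fun i => cT i ^ (d:ℝ)⁻¹),
      ← Finset.prod_filter_mul_prod_filter_not s (fun i => v ∈ A i)
        (fun i => D i ^ (d:ℝ)⁻¹)]
    have e2 : ∀ X : ι → ℝ≥0∞, (∀ i ∈ s, v ∉ A i → X i = D i) →
        ∏ i ∈ s.filter (fun i => ¬ v ∈ A i), X i ^ (d:ℝ)⁻¹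
          = ∏ i ∈ s.filter (fun i => ¬ v ∈ A i), D i ^ (d:ℝ)⁻¹ := by
      intro X hX
      refine Finset.prod_congr rfl fun i hi => ?_
      rw [Finset.mem_filter] at hi
      rw [hX i hi.1 hi.2]
    rw [e2 cF f2F, e2 cT f2T, ← add_mul]
    refine mul_le_mul_left ?_ _
    have htph := two_point_holder (s.filter (fun i => v ∈ A i)) cF cT d
      (hcov v (Finset.mem_insert_self v U')) hd
    refine le_trans htph (le_of_eq (Finset.prod_congr rfl fun i hi => ?_))
    rw [Finset.mem_filter] at hi
    rw [f1 i hi.1 hi.2]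



lemma count_nocross {V : Type*} [Fintype V] [DecidableEq V] (G : SimpleGraph V)
    [DecidableRel G.Adj] (d : ℕ) (hd : 1 ≤ d) (hreg : G.IsRegularOfDegree d) :
    (((Finset.univ :
        Finset (Finset V × Finset V)).filter
        (fun p => ∀ u ∈ p.1, ∀ v ∈ p.2, ¬ G.Adj u v)).card : ℝ≥0∞)
      ≤ ((2 ^ (d + 1) - 1 : ℕ) : ℝ≥0∞) ^ ((Fintype.card V : ℝ) / d) := by
  set F : V → Finset V → ℝ≥0∞ := fun v S => if S ∩ G.neighborFinset v = ∅ then 2 else 1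
    with hF
  set good : Finset V → Finset V :=
    fun S => Finset.univ.filter (fun v => S ∩ G.neighborFinset v = ∅) with hgood
  -- Step A : the cardinality equals the sum of products
  have cardeq : (((Finset.univ : Finset (Finset V × Finset V)).filter
        (fun p => ∀ u ∈ p.1, ∀ v ∈ p.2, ¬ G.Adj u v)).card : ℝ≥0∞)
      = ∑ S ∈ (Finset.univ : Finset V).powerset, ∏ v : V, F v S := by
    have h1 : ((Finset.univ : Finset (Finset V × Finset V)).filter
        (fun p => ∀ u ∈ p.1, ∀ v ∈ p.2, ¬ G.Adj u v)).card
        = ∑ S : Finset V, 2 ^ (good S).card := by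
      rw [Finset.card_filter]
      rw [← Finset.univ_product_univ, Finset.sum_product]
      refine Finset.sum_congr rfl fun S _ => ?_
      have h2 : (∑ T : Finset V, if ∀ u ∈ S, ∀ v ∈ T, ¬ G.Adj u v then 1 else 0)
          = ((Finset.univ : Finset (Finset V)).filter
              (fun T => ∀ u ∈ S, ∀ v ∈ T, ¬ G.Adj u v)).card := by
        rw [Finset.card_filter]
      rw [h2]
      have h3 : (Finset.univ : Finset (Finset V)).filter
          (fun T => ∀ u ∈ S, ∀ v ∈ T, ¬ G.Adj u v) = (good S).powerset := by
        ext T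
        simp only [Finset.mem_filter, Finset.mem_univ, true_and, Finset.mem_powerset, hgood]
        constructor
        · intro h v hv
          simp only [Finset.mem_filter, Finset.mem_univ, true_and]
          rw [Finset.eq_empty_iff_forall_notMem]
          intro u hu
          rw [Finset.mem_inter, SimpleGraph.mem_neighborFinset] at hu
          exact h u hu.1 v hv (hu.2.symm)
        · intro h u hu v hv hadj
          have := h hv
          simp only [Finset.mem_filter, Finset.mem_univ, true_and] at this
          rw [Finset.eq_empty_iff_forall_notMem] at this
          exact this u (Finset.mem_inter.2 ⟨hu, (SimpleGraph.mem_neighborFinset _ _ _).2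
            hadj.symm⟩)
      rw [h3, Finset.card_powerset]
    rw [h1]
    push_cast
    rw [Finset.powerset_univ]
    refine Finset.sum_congr rfl fun S _ => ?_
    have h4 : ∏ v : V, F v S = 2 ^ (good S).card := by
      rw [hF]
      simp only
      rw [Finset.prod_ite (fun _ => (2:ℝ≥0∞)) (fun _ => (1:ℝ≥0∞))]
      simp [hgood]
    rw [h4]
  rw [cardeq]
  -- Step B : apply shearer
  have happ := shearer d hd (Finset.univ : Finset V) (Finset.univ : Finset V)
    (fun v => G.neighborFinset v) F
    (by
      intro i _ S _
      rw [hF]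
      simp only
      rw [Finset.inter_assoc, Finset.inter_self])
    (by
      intro u _
      have : (Finset.univ.filter (fun v => u ∈ G.neighborFinset v)) = G.neighborFinset u := by
        ext v
        simp [SimpleGraph.mem_neighborFinset, SimpleGraph.adj_comm]
      rw [this, G.card_neighborFinset_eq_degree, hreg u])
  refine le_trans happ ?_
  -- Step C : compute the RHS
  have hinner : ∀ v : V, (∑ T ∈ (G.neighborFinset v ∩ Finset.univ).powerset, F v T ^ d)
      = ((2 ^ (d + 1) - 1 : ℕ) : ℝ≥0∞) := by
    intro v
    rw [Finset.inter_univ]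
    have hmem : ∅ ∈ (G.neighborFinset v).powerset := Finset.empty_mem_powerset _
    rw [← Finset.add_sum_erase _ _ hmem]
    have h5 : F v ∅ = 2 := by rw [hF]; simp
    have h6 : ∀ T ∈ ((G.neighborFinset v).powerset).erase ∅, F v T ^ d = 1 := by
      intro T hT
      rw [Finset.mem_erase, Finset.mem_powerset] at hT
      have : T ∩ G.neighborFinset v = T := Finset.inter_eq_left.2 hT.2
      rw [hF]
      simp only [this]
      rw [if_neg hT.1, one_pow]
    rw [Finset.sum_congr rfl h6, Finset.sum_const, h5]
    rw [Finset.card_erase_of_mem hmem, Finset.card_powerset,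
      G.card_neighborFinset_eq_degree, hreg v]
    have h7 : (2:ℝ≥0∞) ^ d = ((2 ^ d : ℕ) : ℝ≥0∞) := by push_cast; ring
    rw [h7, nsmul_eq_mul, mul_one, ← Nat.cast_add]
    congr 1
    have : 1 ≤ 2 ^ d := Nat.one_le_two_pow
    have h8 : 2 ^ (d+1) = 2 ^ d + 2 ^ d := by ring
    omega
  rw [Finset.prod_congr rfl (fun v _ => by rw [hinner v])]
  rw [Finset.prod_const, Finset.card_univ]
  rw [← ENNReal.rpow_natCast (_ ^ (d:ℝ)⁻¹) (Fintype.card V), ← ENNReal.rpow_mul]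
  apply le_of_eq
  congr 1
  rw [div_eq_mul_inv, mul_comm]

section SwapSection

variable {V : Type*} [DecidableEq V] (G : SimpleGraph V) [DecidableRel G.Adj]

/-- a proper 2-coloring of the subgraph induced on `Q` -/
def pc (Q : Finset V) (g : V → Bool) : Prop :=
  ∀ u ∈ Q, ∀ v ∈ Q, G.Adj u v → g u ≠ g v

open Classical in
noncomputable def gq (Q : Finset V) : V → Bool :=
  if h : ∃ g, pc G Q g then h.choose else fun _ => false

lemma gq_spec (Q : Finset V) (h : ∃ g, pc G Q g) : pc G Q (gq G Q) := by
  rw [gq, dif_pos h]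
  exact h.choose_spec

noncomputable def phi (p : Finset V × Finset V) : Finset V × Finset V :=
  ((p.1 ∩ p.2) ∪ ((p.1 \ p.2) ∪ (p.2 \ p.1)).filter
      (fun q => decide (q ∈ p.1) = gq G ((p.1 \ p.2) ∪ (p.2 \ p.1)) q),
   (p.1 ∩ p.2) ∪ ((p.1 \ p.2) ∪ (p.2 \ p.1)).filter
      (fun q => ¬ (decide (q ∈ p.1) = gq G ((p.1 \ p.2) ∪ (p.2 \ p.1)) q)))

lemma proper_decide {A B : Finset V} (hA : ∀ u ∈ A, ∀ v ∈ A, ¬ G.Adj u v)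
    (hB : ∀ u ∈ B, ∀ v ∈ B, ¬ G.Adj u v) :
    pc G ((A \ B) ∪ (B \ A)) (fun v => decide (v ∈ A)) := by
  intro u hu v hv hadj
  simp only [Finset.mem_union, Finset.mem_sdiff] at hu hv
  simp only [ne_eq, decide_eq_decide]
  intro hiff
  rcases hu with ⟨hu1, hu2⟩ | ⟨hu1, hu2⟩ <;> rcases hv with ⟨hv1, hv2⟩ | ⟨hv1, hv2⟩
  · exact hA u hu1 v hv1 hadj
  · exact hv2 (hiff.mp hu1)
  · exact hu2 (hiff.mpr hv1)
  · exact hB u hu1 v hv1 hadj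

section facts
variable (A B : Finset V)

lemma hPQ : ∀ x ∈ A ∩ B, x ∉ (A \ B) ∪ (B \ A) := by
  intro x hx
  simp only [Finset.mem_inter] at hx
  simp only [Finset.mem_union, Finset.mem_sdiff]
  tauto

lemma hST_inter : (phi G (A, B)).1 ∩ (phi G (A, B)).2 = A ∩ B := by
  ext x
  simp only [phi, Finset.mem_inter, Finset.mem_union, Finset.mem_filter, Finset.mem_sdiff]
  by_cases hx : x ∈ A ∧ x ∈ B <;> tauto

lemma hST_union : (phi G (A, B)).1 ∪ (phi G (A, B)).2 = A ∪ B := by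
  ext x
  simp only [phi, Finset.mem_inter, Finset.mem_union, Finset.mem_filter, Finset.mem_sdiff]
  by_cases hg : decide (x ∈ A) = gq G ((A \ B) ∪ (B \ A)) x <;> tauto

lemma mem_phi_fst {q : V} (hq : q ∈ (A \ B) ∪ (B \ A)) :
    (q ∈ (phi G (A, B)).1 ↔ decide (q ∈ A) = gq G ((A \ B) ∪ (B \ A)) q) := by
  have h1 : q ∉ A ∩ B := by
    simp only [Finset.mem_union, Finset.mem_sdiff] at hq
    simp only [Finset.mem_inter]; tauto
  simp only [phi, Finset.mem_union, Finset.mem_filter]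
  simp only [Finset.mem_union] at hq
  tauto

end facts

lemma step1 {V : Type*} [Fintype V] [DecidableEq V] (G : SimpleGraph V)
    [DecidableRel G.Adj] :
    ((Finset.univ : Finset (Finset V)).filter
        (fun s => ∀ u ∈ s, ∀ v ∈ s, ¬ G.Adj u v)).card ^ 2
      ≤ ((Finset.univ : Finset (Finset V × Finset V)).filter
          (fun p => ∀ u ∈ p.1, ∀ v ∈ p.2, ¬ G.Adj u v)).card := by
  set I := (Finset.univ : Finset (Finset V)).filter
      (fun s => ∀ u ∈ s, ∀ v ∈ s, ¬ G.Adj u v) with hI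
  have hsq : I.card ^ 2 = (I ×ˢ I).card := by rw [Finset.card_product]; ring
  rw [hsq]
  apply Finset.card_le_card_of_injOn (phi G)
  · rintro ⟨A, B⟩ hp
    simp only [hI, Finset.mem_product, Finset.mem_filter, Finset.mem_univ, true_and] at hp
    have hp' : (A, B) ∈ I ×ˢ I := hp
    rw [Finset.mem_product] at hp'
    simp only [hI, Finset.mem_filter, Finset.mem_univ, true_and] at hp'
    obtain ⟨hA, hB⟩ := hp'
    refine Finset.mem_filter.mpr ⟨Finset.mem_univ _, ?_⟩
    intro u hu v hv hadj
    have hex : ∃ g, pc G ((A \ B) ∪ (B \ A)) g := ⟨_, proper_decide G hA hB⟩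
    have hg := gq_spec G _ hex
    have hf := proper_decide G hA hB
    simp only [phi, Finset.mem_union, Finset.mem_filter] at hu hv
    rcases hu with hu | ⟨huQ, huc⟩
    · rw [Finset.mem_inter] at hu
      rcases hv with hv | ⟨hvQ, _⟩
      · rw [Finset.mem_inter] at hv
        exact hA u hu.1 v hv.1 hadj
      · rw [Finset.mem_sdiff, Finset.mem_sdiff] at hvQ
        rcases hvQ with ⟨hv1, _⟩ | ⟨hv1, _⟩
        · exact hA u hu.1 v hv1 hadj
        · exact hB u hu.2 v hv1 hadj
    · rcases hv with hv | ⟨hvQ, hvc⟩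
      · rw [Finset.mem_inter] at hv
        rw [Finset.mem_sdiff, Finset.mem_sdiff] at huQ
        rcases huQ with ⟨hu1, _⟩ | ⟨hu1, _⟩
        · exact hA u hu1 v hv.1 hadj
        · exact hB u hu1 v hv.2 hadj
      · have h3 := hg u (Finset.mem_union.mpr huQ) v (Finset.mem_union.mpr hvQ) hadj
        have h4 := hf u (Finset.mem_union.mpr huQ) v (Finset.mem_union.mpr hvQ) hadj
        simp only [ne_eq, decide_eq_decide] at h4
        apply hvc
        have h5 : decide (v ∈ A) = !(decide (u ∈ A)) := by
          rw [Bool.eq_not_iff, ne_eq, decide_eq_decide]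
          tauto
        rw [h5, huc]
        exact (Bool.eq_not_iff.mpr (Ne.symm h3)).symm
  · rintro ⟨A, B⟩ hp ⟨A', B'⟩ hp' heq
    simp only [Finset.coe_product, Set.mem_prod, Finset.mem_coe, hI, Finset.mem_filter,
      Finset.mem_univ, true_and] at hp hp'
    have hP : A ∩ B = A' ∩ B' := by
      rw [← hST_inter G A B, ← hST_inter G A' B', heq]
    have hU : A ∪ B = A' ∪ B' := by
      rw [← hST_union G A B, ← hST_union G A' B', heq]
    have hQgen : ∀ X Y : Finset V, (X \ Y) ∪ (Y \ X) = (X ∪ Y) \ (X ∩ Y) := by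
      intro X Y
      ext x
      simp only [Finset.mem_union, Finset.mem_sdiff, Finset.mem_inter]
      tauto
    have hQ : (A \ B) ∪ (B \ A) = (A' \ B') ∪ (B' \ A') := by
      rw [hQgen, hQgen, hP, hU]
    have hfst : (phi G (A, B)).1 = (phi G (A', B')).1 := by rw [heq]
    have hmemA : ∀ q ∈ (A \ B) ∪ (B \ A), (q ∈ A ↔ q ∈ A') := by
      intro q hq
      have h1 := mem_phi_fst G A B hq
      have h2 := mem_phi_fst G A' B' (hQ ▸ hq)
      rw [hfst, hQ] at h1
      rw [← decide_eq_decide (p := q ∈ A)]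
      by_cases hmem : q ∈ (phi G (A', B')).1
      · rw [h1.mp hmem, h2.mp hmem]
      · have n1 : decide (q ∈ A) ≠ gq G ((A' \ B') ∪ (B' \ A')) q :=
          fun h => hmem (h1.mpr h)
        have n2 : decide (q ∈ A') ≠ gq G ((A' \ B') ∪ (B' \ A')) q :=
          fun h => hmem (h2.mpr h)
        rw [Bool.eq_not_iff.mpr n1, Bool.eq_not_iff.mpr n2]
    have hAiff : ∀ (X Y : Finset V) (a : V),
        a ∈ X ↔ (a ∈ X ∩ Y ∨ (a ∈ (X \ Y) ∪ (Y \ X) ∧ a ∈ X)) := by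
      intro X Y a
      simp only [Finset.mem_inter, Finset.mem_union, Finset.mem_sdiff]
      tauto
    have hBiff : ∀ (X Y : Finset V) (a : V),
        a ∈ Y ↔ (a ∈ X ∩ Y ∨ (a ∈ (X \ Y) ∪ (Y \ X) ∧ a ∉ X)) := by
      intro X Y a
      simp only [Finset.mem_inter, Finset.mem_union, Finset.mem_sdiff]
      tauto
    have hAeq : A = A' := by
      ext a
      rw [hAiff A B a, hAiff A' B' a, ← hP, ← hQ]
      constructor
      · rintro (h | ⟨h1, h2⟩)
        · exact Or.inl h
        · exact Or.inr ⟨h1, (hmemA a h1).mp h2⟩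
      · rintro (h | ⟨h1, h2⟩)
        · exact Or.inl h
        · exact Or.inr ⟨h1, (hmemA a h1).mpr h2⟩
    have hBeq : B = B' := by
      ext a
      rw [hBiff A B a, hBiff A' B' a, ← hP, ← hQ]
      constructor
      · rintro (h | ⟨h1, h2⟩)
        · exact Or.inl h
        · exact Or.inr ⟨h1, fun hc => h2 ((hmemA a h1).mpr hc)⟩
      · rintro (h | ⟨h1, h2⟩)
        · exact Or.inl h
        · exact Or.inr ⟨h1, fun hc => h2 ((hmemA a h1).mp hc)⟩
    simp only [Prod.mk.injEq]
    exact ⟨hAeq, hBeq⟩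

end SwapSection

end Aux

/-- The number of independent sets of a graph `G` (a set of vertices no two of which
are adjacent; the empty set counts). -/
noncomputable def numIndep {V : Type*} (G : SimpleGraph V) : ℕ :=
  Nat.card {s : Finset V // ∀ u ∈ s, ∀ v ∈ s, ¬ G.Adj u v}

/-- **Zhao's theorem.** If `G` is a finite simple `d`-regular graph (`d ≥ 1`, not
necessarily bipartite) with `n` vertices, then `|I(G)| ≤ (2^(d+1) - 1)^(n/(2d))`. -/
theorem zhao_theorem {V : Type*} [Fintype V] (G : SimpleGraph V) [DecidableRel G.Adj]
    (d : ℕ) (hd : 1 ≤ d) (hreg : G.IsRegularOfDegree d) :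
    (numIndep G : ℝ) ≤ ((2 : ℝ) ^ (d + 1) - 1) ^ ((Fintype.card V : ℝ) / (2 * d)) := by
  classical
  have hnum : numIndep G = ((Finset.univ : Finset (Finset V)).filter
      (fun s => ∀ u ∈ s, ∀ v ∈ s, ¬ G.Adj u v)).card := by
    rw [numIndep, Nat.card_eq_fintype_card, Fintype.card_subtype]
  set N := ((Finset.univ : Finset (Finset V × Finset V)).filter
      (fun p => ∀ u ∈ p.1, ∀ v ∈ p.2, ¬ G.Adj u v)).card with hN
  have h1 : numIndep G ^ 2 ≤ N := by rw [hnum]; exact step1 G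
  have h2 := count_nocross G d hd hreg
  rw [← hN] at h2
  set n := Fintype.card V with hn
  set c := 2 ^ (d + 1) - 1 with hc
  have hd0 : (d : ℝ) ≠ 0 := by positivity
  have hexp : (0:ℝ) ≤ (n : ℝ) / d := by positivity
  -- to reals
  have h3 : (N : ℝ) ≤ (c : ℝ) ^ ((n : ℝ) / d) := by
    have hne : ((c : ℕ) : ℝ≥0∞) ^ ((n : ℝ) / d) ≠ ⊤ :=
      ENNReal.rpow_ne_top_of_nonneg hexp (ENNReal.natCast_ne_top c)
    have := ENNReal.toReal_mono hne h2
    rwa [ENNReal.toReal_natCast, ← ENNReal.toReal_rpow, ENNReal.toReal_natCast] at this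
  have h4 : ((numIndep G : ℝ)) ^ 2 ≤ (c : ℝ) ^ ((n : ℝ) / d) := by
    refine le_trans ?_ h3
    exact_mod_cast Nat.cast_le.mpr h1
  have hx0 : (0:ℝ) ≤ (numIndep G : ℝ) := Nat.cast_nonneg _
  have hc0 : (0:ℝ) ≤ (c : ℝ) := Nat.cast_nonneg _
  have h5 : (numIndep G : ℝ) ≤ ((c : ℝ) ^ ((n : ℝ) / d)) ^ ((2:ℝ)⁻¹) := by
    have he : (numIndep G : ℝ) = (((numIndep G : ℝ)) ^ 2) ^ ((2:ℝ)⁻¹) := by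
      rw [← Real.rpow_natCast (numIndep G : ℝ) 2, ← Real.rpow_mul hx0]
      norm_num
    rw [he]
    exact Real.rpow_le_rpow (by positivity) h4 (by norm_num)
  have h6 : ((c : ℝ) ^ ((n : ℝ) / d)) ^ ((2:ℝ)⁻¹) = (c : ℝ) ^ ((n : ℝ) / (2 * d)) := by
    rw [← Real.rpow_mul hc0]
    congr 1
    rw [div_mul_eq_mul_div, ← div_eq_mul_inv, div_div]
  rw [h6] at h5
  have hcast : ((c : ℕ) : ℝ) = (2:ℝ) ^ (d + 1) - 1 := by
    rw [hc, Nat.cast_sub Nat.one_le_two_pow]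
    push_cast
    ring
  rwa [hcast] at h5
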